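/- Let (R_e)_{e∈ℕ} be any sequence of equivalence relations on ℕ that is uniformly c.e., i.e., {⟨e,x,y⟩ : x R_e y} is computably enumerable. Then there exists a co-c.e. (Π⁰₁) equivalence relation S on ℕ such that for every e ∈ ℕ: S has an equivalence class of cardinality exactly e+1 if and only if R_e has no equivalence class of cardinality exactly e+1. In particular, S is not isomorphic to R_e for any e. -/

import Mathlib

namespace CoceDiag
open Nat.Partrec (Code)
open Nat.Partrec.Code

def stage (c : Code) (e x y s : ℕ) : Bool :=
  (evaln s c (Nat.pair e (Nat.pair x y))).isSome

theorem stage_mono {c : Code} {e x y : ℕ} {s s' : ℕ} (h : s ≤ s')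
    (hs : stage c e x y s = true) : stage c e x y s' = true := by
  unfold stage at *
  rw [Option.isSome_iff_exists] at *
  obtain ⟨a, ha⟩ := hs
  exact ⟨a, evaln_mono h ha⟩

def cnt (c : Code) (e x s : ℕ) : ℕ :=
  ((List.range s).filter fun y => stage c e x y s).length

theorem cnt_mono (c : Code) (e x : ℕ) {s s' : ℕ} (h : s ≤ s') :
    cnt c e x s ≤ cnt c e x s' := by
  have h1 : ((List.range s).filter fun y => stage c e x y s).Sublist
      ((List.range s).filter fun y => stage c e x y s') :=
    List.monotone_filter_right _ (fun y hy => stage_mono h hy)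
  have h2 : ((List.range s).filter fun y => stage c e x y s').Sublist
      ((List.range s').filter fun y => stage c e x y s') :=
    (List.range_sublist.2 h).filter _
  exact (h1.trans h2).length_le

theorem exists_stage_for_finset (c : Code) (e x : ℕ) (F : Finset ℕ)
    (h : ∀ y ∈ F, ∃ s, stage c e x y s = true) :
    ∃ s, ∀ y ∈ F, y < s ∧ stage c e x y s = true := by
  classical
  induction F using Finset.induction_on with
  | empty => exact ⟨0, by simp⟩
  | @insert a F' ha ih =>
    obtain ⟨s1, hs1⟩ := ih fun y hy => h y (Finset.mem_insert_of_mem hy)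
    obtain ⟨s2, hs2⟩ := h a (Finset.mem_insert_self _ _)
    refine ⟨max (max s1 s2) (a + 1), ?_⟩
    intro y hy
    rcases Finset.mem_insert.1 hy with rfl | hy
    · exact ⟨lt_of_lt_of_le (Nat.lt_succ_self _) (le_max_right _ _),
        stage_mono (le_trans (le_max_right s1 s2) (le_max_left _ _)) hs2⟩
    · obtain ⟨h1, h2⟩ := hs1 y hy
      exact ⟨lt_of_lt_of_le h1 (le_trans (le_max_left s1 s2) (le_max_left _ _)),
        stage_mono (le_trans (le_max_left s1 s2) (le_max_left _ _)) h2⟩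

theorem le_cnt_iff {c : Code} {R : ℕ → ℕ → ℕ → Prop}
    (hcR : ∀ e x y, R e x y ↔ ∃ s, stage c e x y s = true) (e x k : ℕ) :
    (∃ s, k ≤ cnt c e x s) ↔ ((k : ℕ∞) ≤ ({y | R e x y}).encard) := by
  constructor
  · rintro ⟨s, hs⟩
    set l := (List.range s).filter fun y => stage c e x y s with hl
    have hnd : l.Nodup := (List.nodup_range (n := s)).filter _
    have hsub : (↑l.toFinset : Set ℕ) ⊆ {y | R e x y} := by
      intro y hy
      have hy' : y ∈ l := by simpa using hy
      have := (List.mem_filter.1 hy').2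
      exact (hcR e x y).2 ⟨s, this⟩
    calc (k : ℕ∞) ≤ (l.length : ℕ∞) := by exact_mod_cast hs
      _ = (l.toFinset.card : ℕ∞) := by rw [List.toFinset_card_of_nodup hnd]
      _ = (↑l.toFinset : Set ℕ).encard := (Set.encard_coe_eq_coe_finsetCard _).symm
      _ ≤ _ := Set.encard_mono hsub
  · intro hk
    obtain ⟨t, hts, htk⟩ := Set.exists_subset_encard_eq hk
    have hfin : t.Finite := Set.finite_of_encard_eq_coe htk
    have hcard : (hfin.toFinset.card : ℕ∞) = (k : ℕ∞) := by
      rw [← hfin.encard_eq_coe_toFinset_card, htk]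
    have hcard' : hfin.toFinset.card = k := by exact_mod_cast hcard
    obtain ⟨s, hs⟩ := exists_stage_for_finset c e x hfin.toFinset
      (fun y hy => (hcR e x y).1 (hts (hfin.mem_toFinset.1 hy)))
    refine ⟨s, ?_⟩
    have hsub : hfin.toFinset ⊆ ((List.range s).filter fun y => stage c e x y s).toFinset := by
      intro y hy
      obtain ⟨h1, h2⟩ := hs y hy
      simp only [List.mem_toFinset, List.mem_filter, List.mem_range]
      exact ⟨h1, h2⟩
    calc k = hfin.toFinset.card := hcard'.symm
      _ ≤ _ := Finset.card_le_card hsub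
      _ = cnt c e x s := List.toFinset_card_of_nodup ((List.nodup_range (n := s)).filter _)

def confP (c : Code) (e n s : ℕ) : Prop :=
  n ≤ s ∧ ((List.range (n + 1)).filter fun x =>
      decide (e + 1 ≤ cnt c e x s ∧ ¬ (e + 2 ≤ cnt c e x s))).length = 0

instance (c : Code) (e n s : ℕ) : Decidable (confP c e n s) := by
  unfold confP; infer_instance

theorem confP_iff {c : Code} {e n s : ℕ} :
    confP c e n s ↔ (n ≤ s ∧ ∀ x ≤ n, e + 1 ≤ cnt c e x s → e + 2 ≤ cnt c e x s) := by
  unfold confP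
  rw [List.length_eq_zero_iff, List.filter_eq_nil_iff]
  constructor
  · rintro ⟨h1, h2⟩
    refine ⟨h1, fun x hx h => ?_⟩
    by_contra hno
    have := h2 x (List.mem_range.2 (Nat.lt_succ_of_le hx))
    simp only [decide_eq_true_eq, not_and, not_not] at this
    exact hno (this h)
  · rintro ⟨h1, h2⟩
    refine ⟨h1, fun x hx => ?_⟩
    have hx' := Nat.lt_succ_iff.1 (List.mem_range.1 hx)
    simp only [decide_eq_true_eq, not_and, not_not]
    exact h2 x hx'

def rem (c : Code) (e n : ℕ) : Prop := ∃ s, confP c e n s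

def col (x : ℕ) : ℕ := x.unpair.1

def prt (x : ℕ) : Option ℕ :=
  if x.unpair.2 ≤ x.unpair.1 then none else some ((x.unpair.2 - x.unpair.1 - 1).unpair.1)

def remAt (c : Code) (x s : ℕ) : Prop :=
  confP c (col x) ((prt x).getD 0) s ∧ (prt x).isSome = true

def remX (c : Code) (x : ℕ) : Prop := ∃ s, remAt c x s

theorem remX_iff {c : Code} {x : ℕ} :
    remX c x ↔ ∃ n, prt x = some n ∧ rem c (col x) n := by
  cases h : prt x with
  | none => simp [remX, remAt, h]
  | some n => simp [remX, remAt, rem, h]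

theorem remX_congr {c : Code} {x y : ℕ} (h1 : col x = col y) (h2 : prt x = prt y) :
    remX c x ↔ remX c y := by
  unfold remX remAt
  rw [h1, h2]

def S (c : Code) (x y : ℕ) : Prop :=
  col x = col y ∧ (prt x = prt y ∨ (¬ remX c x ∧ ¬ remX c y))

theorem S_equiv (c : Code) : Equivalence (S c) := by
  constructor
  · exact fun x => ⟨rfl, Or.inl rfl⟩
  · rintro x y ⟨h1, h2⟩
    exact ⟨h1.symm, by rcases h2 with h | ⟨hx, hy⟩; exacts [Or.inl h.symm, Or.inr ⟨hy, hx⟩]⟩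
  · rintro x y z ⟨hc1, h1⟩ ⟨hc2, h2⟩
    refine ⟨hc1.trans hc2, ?_⟩
    rcases h1 with hp1 | ⟨hx, hy⟩
    · rcases h2 with hp2 | ⟨hy, hz⟩
      · exact Or.inl (hp1.trans hp2)
      · exact Or.inr ⟨fun h => hy ((remX_congr hc1 hp1).1 h), hz⟩
    · rcases h2 with hp2 | ⟨hy', hz⟩
      · exact Or.inr ⟨hx, fun h => hy ((remX_congr hc2 hp2).2 h)⟩
      · exact Or.inr ⟨hx, hz⟩

theorem S_class_of_remX {c : Code} {x : ℕ} (h : remX c x) :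
    {y | S c x y} = {y | col y = col x ∧ prt y = prt x} := by
  ext y
  simp only [Set.mem_setOf_eq, S]
  constructor
  · rintro ⟨hcol, hor⟩
    rcases hor with hp | ⟨hx, _⟩
    · exact ⟨hcol.symm, hp.symm⟩
    · exact absurd h hx
  · rintro ⟨h1, h2⟩
    exact ⟨h1.symm, Or.inl h2.symm⟩

theorem S_class_of_not_remX {c : Code} {x : ℕ} (h : ¬ remX c x) :
    {y | S c x y} = {y | col y = col x ∧ ¬ remX c y} := by
  ext y
  simp only [Set.mem_setOf_eq, S]
  constructor
  · rintro ⟨hcol, hor⟩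
    refine ⟨hcol.symm, ?_⟩
    rcases hor with hp | ⟨_, hy⟩
    · exact fun hy => h ((remX_congr hcol hp).2 hy)
    · exact hy
  · rintro ⟨h1, h2⟩
    exact ⟨h1.symm, Or.inr ⟨h, h2⟩⟩

theorem T_infinite (e n : ℕ) : {y | col y = e ∧ prt y = some n}.Infinite := by
  apply Set.infinite_of_injective_forall_mem
    (f := fun i : ℕ => Nat.pair e (e + 1 + Nat.pair n i)) ?_ ?_
  · intro i j hij
    have h2 := congrArg (fun t => t.unpair.2) hij
    simp only [Nat.unpair_pair] at h2
    have : Nat.pair n i = Nat.pair n j := by omega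
    have := congrArg (fun t => t.unpair.2) this
    simpa using this
  · intro i
    constructor
    · simp [col]
    · show prt (Nat.pair e (e + 1 + Nat.pair n i)) = some n
      unfold prt
      rw [Nat.unpair_pair]
      simp only []
      rw [if_neg (by omega)]
      have h3 : e + 1 + Nat.pair n i - e - 1 = Nat.pair n i := by omega
      rw [h3, Nat.unpair_pair]

theorem pair_right_inj (e : ℕ) : Function.Injective (Nat.pair e) := by
  intro u v h
  have := congrArg (fun t => t.unpair.2) h
  simpa using this

theorem K_eq (e : ℕ) : {y | col y = e ∧ prt y = none}
    = ↑((Finset.range (e + 1)).image fun u => Nat.pair e u) := by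
  ext y
  simp only [Set.mem_setOf_eq, Finset.coe_image, Set.mem_image, Finset.mem_coe,
    Finset.mem_range, Nat.lt_succ_iff]
  constructor
  · rintro ⟨h1, h2⟩
    have hle : y.unpair.2 ≤ y.unpair.1 := by
      by_contra hle
      simp [prt, if_neg hle] at h2
    subst h1
    exact ⟨y.unpair.2, hle, Nat.pair_unpair y⟩
  · rintro ⟨u, hu, rfl⟩
    exact ⟨by simp [col], by simp [prt, hu]⟩

theorem K_encard (e : ℕ) :
    {y | col y = e ∧ prt y = none}.encard = ((e + 1 : ℕ) : ℕ∞) := by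
  rw [K_eq, Set.encard_coe_eq_coe_finsetCard,
    Finset.card_image_of_injective _ (pair_right_inj e), Finset.card_range]

theorem U_eq_of_all {c : Code} {e : ℕ} (h : ∀ n, rem c e n) :
    {y | col y = e ∧ ¬ remX c y} = {y | col y = e ∧ prt y = none} := by
  ext y
  simp only [Set.mem_setOf_eq]
  constructor
  · rintro ⟨h1, h2⟩
    refine ⟨h1, ?_⟩
    cases hp : prt y with
    | none => rfl
    | some n => exact absurd (remX_iff.2 ⟨n, hp, by rw [h1]; exact h n⟩) h2
  · rintro ⟨h1, h2⟩
    refine ⟨h1, fun hr => ?_⟩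
    obtain ⟨n, hn, _⟩ := remX_iff.1 hr
    rw [h2] at hn
    cases hn

theorem U_infinite_of_ex {c : Code} {e n : ℕ} (h : ¬ rem c e n) :
    {y | col y = e ∧ ¬ remX c y}.Infinite := by
  refine (T_infinite e n).mono ?_
  rintro y ⟨h1, h2⟩
  refine ⟨h1, fun hr => ?_⟩
  obtain ⟨m, hm, hrem⟩ := remX_iff.1 hr
  rw [h2] at hm
  obtain rfl := (Option.some_inj.1 hm).symm
  rw [h1] at hrem
  exact h hrem

theorem remAll_iff {c : Code} {R : ℕ → ℕ → ℕ → Prop}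
    (hcR : ∀ e x y, R e x y ↔ ∃ s, stage c e x y s = true) (e : ℕ) :
    (∀ n, rem c e n) ↔ ¬ ∃ x, ({y | R e x y}).encard = ((e + 1 : ℕ) : ℕ∞) := by
  constructor
  · rintro hall ⟨x0, hx0⟩
    obtain ⟨s0, hs0⟩ := (le_cnt_iff hcR e x0 (e + 1)).2 (le_of_eq hx0.symm)
    have hub : ∀ s, cnt c e x0 s ≤ e + 1 := by
      intro s
      by_contra hno
      have h2 : ((e + 2 : ℕ) : ℕ∞) ≤ ({y | R e x0 y}).encard :=
        (le_cnt_iff hcR e x0 (e + 2)).1 ⟨s, by omega⟩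
      rw [hx0] at h2
      exact absurd (by exact_mod_cast h2) (by omega)
    obtain ⟨s, hs⟩ := hall (max x0 s0)
    rw [confP_iff] at hs
    have hcnt1 : e + 1 ≤ cnt c e x0 s :=
      le_trans hs0 (cnt_mono c e x0 (le_trans (le_max_right x0 s0) hs.1))
    have := hs.2 x0 (le_max_left _ _) hcnt1
    have := hub s
    omega
  · intro hno n
    have key : ∀ x, ∃ s0, ∀ s, s0 ≤ s → (e + 1 ≤ cnt c e x s → e + 2 ≤ cnt c e x s) := by
      intro x
      by_cases hbig : (((e + 1 : ℕ)) : ℕ∞) ≤ ({y | R e x y}).encard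
      · have hne : ({y | R e x y}).encard ≠ ((e + 1 : ℕ) : ℕ∞) := fun h => hno ⟨x, h⟩
        have hlt : (((e + 1 : ℕ)) : ℕ∞) < ({y | R e x y}).encard := lt_of_le_of_ne hbig (Ne.symm hne)
        have h2 : (((e + 2 : ℕ)) : ℕ∞) ≤ ({y | R e x y}).encard := by
          have := Order.add_one_le_of_lt hlt
          refine le_trans (le_of_eq ?_) this
          push_cast
          ring
        obtain ⟨s0, h⟩ := (le_cnt_iff hcR e x (e + 2)).2 h2
        exact ⟨s0, fun s hss _ => le_trans h (cnt_mono c e x hss)⟩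
      · exact ⟨0, fun s _ hcnt => absurd ((le_cnt_iff hcR e x (e + 1)).1 ⟨s, hcnt⟩) hbig⟩
    choose f hf using key
    set s0 := (Finset.range (n + 1)).sup f with hs0
    refine ⟨max n s0, confP_iff.2 ⟨le_max_left _ _, ?_⟩⟩
    intro x hx hc1
    refine hf x (max n s0) (le_trans ?_ (le_max_right n s0)) hc1
    exact Finset.le_sup (Finset.mem_range.2 (Nat.lt_succ_of_le hx))

instance (c : Code) (x s : ℕ) : Decidable (remAt c x s) := by
  unfold remAt; infer_instance

def NP (c : Code) (q : (ℕ × ℕ) × ℕ) : Prop :=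
  ¬ (col q.1.1 = col q.1.2) ∨
    (¬ (prt q.1.1 = prt q.1.2) ∧ (remAt c q.1.1 q.2 ∨ remAt c q.1.2 q.2))

instance (c : Code) (q : (ℕ × ℕ) × ℕ) : Decidable (NP c q) := by
  unfold NP; infer_instance

theorem not_S_iff {c : Code} {x y : ℕ} : ¬ S c x y ↔ ∃ s, NP c ((x, y), s) := by
  constructor
  · intro h
    by_cases hA : col x = col y
    · have hB : ¬ (prt x = prt y) ∧ (remX c x ∨ remX c y) := by
        unfold S at h; tauto
      rcases hB.2 with ⟨s, hs⟩ | ⟨s, hs⟩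
      · exact ⟨s, Or.inr ⟨hB.1, Or.inl hs⟩⟩
      · exact ⟨s, Or.inr ⟨hB.1, Or.inr hs⟩⟩
    · exact ⟨0, Or.inl hA⟩
  · rintro ⟨s, h⟩ ⟨hA, hB⟩
    rcases h with h | ⟨h1, h2⟩
    · exact h hA
    · rcases hB with hp | ⟨px, py⟩
      · exact h1 hp
      · rcases h2 with h2 | h2
        · exact px ⟨s, h2⟩
        · exact py ⟨s, h2⟩

theorem list_filterMap_ite {α : Type*} (p : α → Prop) [DecidablePred p] (l : List α) :
    (l.filterMap fun y => if p y then some y else none) = l.filter fun y => decide (p y) := by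
  induction l with
  | nil => rfl
  | cons a l ih =>
    by_cases h : p a <;> simp [List.filterMap_cons, List.filter_cons, h, ih]

theorem list_filterMap_ite_bool {α : Type*} (p : α → Bool) (l : List α) :
    (l.filterMap fun y => if p y = true then some y else none) = l.filter p := by
  induction l with
  | nil => rfl
  | cons a l ih =>
    cases h : p a <;> simp [List.filterMap_cons, List.filter_cons, h, ih]

section PrimrecFacts

open Primrec

variable (c : Code)

theorem prim_stage : Primrec fun q : ((ℕ × ℕ) × ℕ) × ℕ => stage c q.1.1.1 q.1.1.2 q.2 q.1.2 :=
  option_isSome.comp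
    (primrec_evaln.comp
      ((Primrec.pair ((snd.comp fst).pair (const c))
        (Primrec₂.natPair.comp (fst.comp (fst.comp fst))
          (Primrec₂.natPair.comp (snd.comp (fst.comp fst)) snd)))))

theorem prim_cnt : Primrec fun q : (ℕ × ℕ) × ℕ => cnt c q.1.1 q.1.2 q.2 := by
  have hcond : PrimrecPred fun q : ((ℕ × ℕ) × ℕ) × ℕ =>
      stage c q.1.1.1 q.1.1.2 q.2 q.1.2 = true :=
    Primrec.eq.comp (prim_stage c) (const true)
  have hg : Primrec₂ fun (a : (ℕ × ℕ) × ℕ) (y : ℕ) =>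
      if stage c a.1.1 a.1.2 y a.2 = true then some y else none :=
    Primrec.to₂ (Primrec.ite hcond (option_some.comp snd) (const none))
  have hfm : Primrec fun a : (ℕ × ℕ) × ℕ =>
      ((List.range a.2).filterMap fun y => if stage c a.1.1 a.1.2 y a.2 = true
        then some y else none) :=
    listFilterMap (list_range.comp snd) hg
  refine (list_length.comp hfm).of_eq fun a => ?_
  rw [list_filterMap_ite_bool]
  rfl

theorem prim_confP : PrimrecPred fun q : (ℕ × ℕ) × ℕ => confP c q.1.1 q.1.2 q.2 := by
  have he : Primrec fun q : ((ℕ × ℕ) × ℕ) × ℕ => q.1.1.1 := fst.comp (fst.comp fst)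
  have hcnt' : Primrec fun q : ((ℕ × ℕ) × ℕ) × ℕ => cnt c q.1.1.1 q.2 q.1.2 :=
    (prim_cnt c).comp ((he.pair snd).pair (snd.comp fst))
  have hbadcond : PrimrecPred fun q : ((ℕ × ℕ) × ℕ) × ℕ =>
      (q.1.1.1 + 1 ≤ cnt c q.1.1.1 q.2 q.1.2 ∧ ¬ (q.1.1.1 + 2 ≤ cnt c q.1.1.1 q.2 q.1.2)) :=
    PrimrecPred.and (nat_le.comp (succ.comp he) hcnt')
      (PrimrecPred.not (nat_le.comp (succ.comp (succ.comp he)) hcnt'))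
  have hg : Primrec₂ fun (a : (ℕ × ℕ) × ℕ) (x : ℕ) =>
      if (a.1.1 + 1 ≤ cnt c a.1.1 x a.2 ∧ ¬ (a.1.1 + 2 ≤ cnt c a.1.1 x a.2))
        then some x else none :=
    Primrec.to₂ (Primrec.ite hbadcond (option_some.comp snd) (const none))
  have hfm : Primrec fun a : (ℕ × ℕ) × ℕ =>
      ((List.range (a.1.2 + 1)).filterMap fun x =>
        if (a.1.1 + 1 ≤ cnt c a.1.1 x a.2 ∧ ¬ (a.1.1 + 2 ≤ cnt c a.1.1 x a.2))
          then some x else none) :=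
    listFilterMap (list_range.comp (succ.comp (snd.comp fst))) hg
  have h2 : PrimrecPred fun a : (ℕ × ℕ) × ℕ =>
      ((List.range (a.1.2 + 1)).filterMap fun x =>
        if (a.1.1 + 1 ≤ cnt c a.1.1 x a.2 ∧ ¬ (a.1.1 + 2 ≤ cnt c a.1.1 x a.2))
          then some x else none).length = 0 :=
    Primrec.eq.comp (list_length.comp hfm) (const 0)
  have h1 : PrimrecPred fun a : (ℕ × ℕ) × ℕ => a.1.2 ≤ a.2 :=
    nat_le.comp (snd.comp fst) snd
  refine (h1.and h2).of_eq fun a => ?_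
  unfold confP
  rw [list_filterMap_ite]

theorem prim_col : Primrec col := fst.comp Primrec.unpair

theorem prim_prt : Primrec prt :=
  Primrec.ite (nat_le.comp (snd.comp Primrec.unpair) (fst.comp Primrec.unpair))
    (const none)
    (option_some.comp (fst.comp (Primrec.unpair.comp
      (nat_sub.comp
        (nat_sub.comp (snd.comp Primrec.unpair) (fst.comp Primrec.unpair))
        (const 1)))))

theorem prim_remAt : PrimrecPred fun p : ℕ × ℕ => remAt c p.1 p.2 := by
  have h1 : PrimrecPred fun p : ℕ × ℕ => confP c (col p.1) ((prt p.1).getD 0) p.2 :=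
    (prim_confP c).comp
      (((prim_col.comp fst).pair (option_getD.comp (prim_prt.comp fst) (const 0))).pair snd)
  have h2 : PrimrecPred fun p : ℕ × ℕ => (prt p.1).isSome = true :=
    Primrec.eq.comp (option_isSome.comp (prim_prt.comp fst)) (const true)
  exact (h1.and h2).of_eq fun p => Iff.rfl

theorem prim_NP : PrimrecPred (NP c) := by
  have h1 : PrimrecPred fun q : (ℕ × ℕ) × ℕ => ¬ (col q.1.1 = col q.1.2) :=
    PrimrecPred.not (Primrec.eq.comp (prim_col.comp (fst.comp fst)) (prim_col.comp (snd.comp fst)))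
  have h2 : PrimrecPred fun q : (ℕ × ℕ) × ℕ => ¬ (prt q.1.1 = prt q.1.2) :=
    PrimrecPred.not (Primrec.eq.comp (prim_prt.comp (fst.comp fst)) (prim_prt.comp (snd.comp fst)))
  have h3 : PrimrecPred fun q : (ℕ × ℕ) × ℕ => remAt c q.1.1 q.2 :=
    (prim_remAt c).comp ((fst.comp fst).pair snd)
  have h4 : PrimrecPred fun q : (ℕ × ℕ) × ℕ => remAt c q.1.2 q.2 :=
    (prim_remAt c).comp ((snd.comp fst).pair snd)
  exact (h1.or (h2.and (h3.or h4))).of_eq fun q => Iff.rfl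

end PrimrecFacts

theorem S_coCE (c : Code) : REPred fun p : ℕ × ℕ => ¬ S c p.1 p.2 := by
  have hg : Primrec₂ fun (p : ℕ × ℕ) (s : ℕ) => if NP c (p, s) then some () else none :=
    Primrec.to₂ (Primrec.ite ((prim_NP c).comp Primrec.id)
      (Primrec.const (some ())) (Primrec.const none))
  have hpr : Partrec fun p : ℕ × ℕ =>
      Nat.rfindOpt fun s => if NP c (p, s) then some () else none :=
    Partrec.rfindOpt hg.to_comp
  refine hpr.of_eq fun a => ?_
  apply Part.ext
  intro u
  constructor
  · intro hu
    obtain ⟨n, hn⟩ := Nat.rfindOpt_spec hu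
    have hNP : NP c (a, n) := by
      by_contra h
      rw [if_neg h] at hn
      cases hn
    have : ¬ S c a.1 a.2 := not_S_iff.2 ⟨n, hNP⟩
    exact Part.mem_assert this (Part.mem_some _)
  · intro hu
    have hns : ¬ S c a.1 a.2 := by
      by_contra h
      rw [Part.assert_neg (by simpa using h)] at hu
      exact Part.notMem_none u hu
    obtain ⟨s, hs⟩ := not_S_iff.1 hns
    have hdom : (Nat.rfindOpt fun s => if NP c (a, s) then some () else none).Dom :=
      Nat.rfindOpt_dom.2 ⟨s, (), by rw [if_pos hs]; rfl⟩
    have := Part.get_mem hdom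
    have hu' : u = () := Subsingleton.elim _ _
    rw [hu']
    simpa using this


theorem main_iff {c : Code} {R : ℕ → ℕ → ℕ → Prop}
    (hcR : ∀ e x y, R e x y ↔ ∃ s, stage c e x y s = true) (e : ℕ) :
    (∃ x, ({y | S c x y}).encard = ((e + 1 : ℕ) : ℕ∞)) ↔
      ¬ ∃ x, ({y | R e x y}).encard = ((e + 1 : ℕ) : ℕ∞) := by
  constructor
  · rintro ⟨x, hx⟩
    by_cases hr : remX c x
    · exfalso
      obtain ⟨n, hn, _⟩ := remX_iff.1 hr
      rw [S_class_of_remX hr] at hx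
      have hinf : {y | col y = col x ∧ prt y = prt x}.Infinite := by
        rw [hn]; exact T_infinite (col x) n
      rw [hinf.encard_eq] at hx
      exact (WithTop.top_ne_coe (a := e + 1)) (by exact_mod_cast hx)
    · rw [S_class_of_not_remX hr] at hx
      by_cases hall : ∀ n, rem c (col x) n
      · rw [U_eq_of_all hall, K_encard] at hx
        have hcc : col x = e := by
          have : col x + 1 = e + 1 := by exact_mod_cast hx
          omega
        rw [← hcc]
        exact (remAll_iff hcR (col x)).1 hall
      · exfalso
        push_neg at hall
        obtain ⟨n, hn⟩ := hall
        rw [(U_infinite_of_ex hn).encard_eq] at hx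
        exact (WithTop.top_ne_coe (a := e + 1)) (by exact_mod_cast hx)
  · intro hR
    have hall : ∀ n, rem c e n := (remAll_iff hcR e).2 hR
    refine ⟨Nat.pair e 0, ?_⟩
    have hprt0 : prt (Nat.pair e 0) = none := by
      unfold prt
      rw [Nat.unpair_pair]
      simp
    have h1 : ¬ remX c (Nat.pair e 0) := by
      intro h
      obtain ⟨n, hn, _⟩ := remX_iff.1 h
      rw [hprt0] at hn
      cases hn
    have hcol : col (Nat.pair e 0) = e := by simp [col]
    rw [S_class_of_not_remX h1, hcol, U_eq_of_all hall, K_encard]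

end CoceDiag

/-- A binary relation on ℕ is c.e. (Σ⁰₁) if its set of pairs is computably enumerable. -/
def RelCE (R : ℕ → ℕ → Prop) : Prop := REPred fun p : ℕ × ℕ => R p.1 p.2

/-- A binary relation on ℕ is co-c.e. (Π⁰₁) if its complement is computably enumerable. -/
def RelCoCE (R : ℕ → ℕ → Prop) : Prop := RelCE fun x y => ¬ R x y

/-- Isomorphism of binary relations on ℕ. -/
def RelIso' (R R' : ℕ → ℕ → Prop) : Prop :=
  ∃ f : ℕ → ℕ, Function.Bijective f ∧ ∀ x y, R x y ↔ R' (f x) (f y)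

/-- Given a uniformly c.e. sequence `(R_e)` of equivalence relations on ℕ, there is a
co-c.e. equivalence relation `S` such that for each `e`, `S` has a class of cardinality
exactly `e+1` iff `R_e` has no class of cardinality exactly `e+1`; in particular `S` is
isomorphic to no `R_e`. -/
theorem coceer_diagonalizing_against_uniformly_ce_family
    (R : ℕ → ℕ → ℕ → Prop) (hEquiv : ∀ e, Equivalence (R e))
    (hCE : REPred fun t : ℕ × ℕ × ℕ => R t.1 t.2.1 t.2.2) :
    ∃ S : ℕ → ℕ → Prop, Equivalence S ∧ RelCoCE S ∧
      (∀ e : ℕ, (∃ x, ({y | S x y}).encard = ((e + 1 : ℕ) : ℕ∞)) ↔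
        ¬ ∃ x, ({y | R e x y}).encard = ((e + 1 : ℕ) : ℕ∞)) ∧
      (∀ e : ℕ, ¬ RelIso' S (R e)) := by
  classical
  obtain ⟨c, hc⟩ := Nat.Partrec.Code.exists_code.1 hCE
  have hcR : ∀ e x y, R e x y ↔ ∃ s, CoceDiag.stage c e x y s = true := by
    intro e x y
    have h0 : Nat.pair e (Nat.pair x y) = Encodable.encode ((e, x, y) : ℕ × ℕ × ℕ) := rfl
    have h1 : (Nat.Partrec.Code.eval c (Nat.pair e (Nat.pair x y))).Dom ↔ R e x y := by
      rw [hc, h0]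
      simp [Encodable.encodek, Part.assert]
    rw [← h1]
    unfold CoceDiag.stage
    constructor
    · intro h
      obtain ⟨a, ha⟩ := Part.dom_iff_mem.1 h
      obtain ⟨k, hk⟩ := Nat.Partrec.Code.evaln_complete.1 ha
      exact ⟨k, Option.isSome_iff_exists.2 ⟨a, hk⟩⟩
    · rintro ⟨s, hs⟩
      obtain ⟨a, ha⟩ := Option.isSome_iff_exists.1 hs
      exact Part.dom_iff_mem.2 ⟨a, Nat.Partrec.Code.evaln_complete.2 ⟨s, ha⟩⟩
  refine ⟨CoceDiag.S c, CoceDiag.S_equiv c, CoceDiag.S_coCE c,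
    fun e => CoceDiag.main_iff hcR e, ?_⟩
  intro e hiso
  obtain ⟨f, hbij, hf⟩ := hiso
  have himg : ∀ x, f '' {y | CoceDiag.S c x y} = {y | R e (f x) y} := by
    intro x
    ext z
    constructor
    · rintro ⟨y, hy, rfl⟩
      exact (hf x y).1 hy
    · intro hz
      obtain ⟨y, rfl⟩ := hbij.2 z
      exact ⟨y, (hf x y).2 hz, rfl⟩
  have hmain := CoceDiag.main_iff hcR e
  by_cases hS : ∃ x, ({y | CoceDiag.S c x y}).encard = ((e + 1 : ℕ) : ℕ∞)
  · obtain ⟨x, hx⟩ := hS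
    refine (hmain.1 ⟨x, hx⟩) ⟨f x, ?_⟩
    rw [← himg x, hbij.1.encard_image]
    exact hx
  · have h2 := mt hmain.2 hS
    rw [not_not] at h2
    obtain ⟨x', hx'⟩ := h2
    obtain ⟨x, rfl⟩ := hbij.2 x'
    refine hS ⟨x, ?_⟩
    rw [← hbij.1.encard_image, himg x]
    exact hx'
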